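/- For any graph G with no isolated vertices, the brushing number of G is at most the zero-forcing number of the line graph of G, i.e., B(G) ≤ Z(L(G)). -/

import Mathlib

open scoped BigOperators

namespace Paper

variable {V : Type*}

/-- The zero-forcing closure: vertices that eventually become black starting from `S`. -/
inductive ZFClosure (G : SimpleGraph V) (S : Set V) : V → Prop
  | init {v : V} : v ∈ S → ZFClosure G S v
  | force {v w : V} : ZFClosure G S v → G.Adj v w →
      (∀ u, G.Adj v u → u ≠ w → ZFClosure G S u) → ZFClosure G S w

/-- `S` is a zero-forcing set of `G`. -/
def IsZeroForcingSet (G : SimpleGraph V) (S : Set V) : Prop :=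
  ∀ v : V, ZFClosure G S v

/-- The zero-forcing number `Z(G)`. -/
noncomputable def zfNumber (G : SimpleGraph V) : ℕ :=
  sInf {n | ∃ S : Set V, IsZeroForcingSet G S ∧ S.ncard = n}

/-- A state of the brushing process: the set of vertices that have fired (and hence
are clean), the set of dirty edges, and the number of brushes at each vertex. -/
structure BrushConfig (V : Type*) where
  fired : Set V
  dirty : Set (Sym2 V)
  brushes : V → ℕ

open Classical in
def BrushStep (G : SimpleGraph V) (restricted : Bool) (c c' : BrushConfig V) : Prop :=
  ∃ (v : V) (f : Sym2 V → ℕ),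
    v ∉ c.fired ∧
    (∀ e ∈ c.dirty, v ∈ e → if restricted then f e = 1 else 1 ≤ f e) ∧
    (∑ᶠ e ∈ {e ∈ c.dirty | v ∈ e}, f e) ≤ c.brushes v ∧
    c'.fired = insert v c.fired ∧
    c'.dirty = {e ∈ c.dirty | v ∉ e} ∧
    ∀ w : V, c'.brushes w =
      (if w = v then 0 else c.brushes w) + c.dirty.indicator f s(v, w)

/-- The initial brush configuration `ω` cleans the graph `G`:  starting with every vertex
and every edge dirty, some sequence of firings results in every vertex having fired. -/
def Cleans (G : SimpleGraph V) (restricted : Bool) (ω : V → ℕ) : Prop :=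
  ∃ c : BrushConfig V,
    Relation.ReflTransGen (BrushStep G restricted) ⟨∅, G.edgeSet, ω⟩ c ∧
    c.fired = Set.univ

/-- The brushing number `B(G)` (several brushes may traverse a single edge). -/
noncomputable def brushNumber (G : SimpleGraph V) : ℕ :=
  sInf {n | ∃ ω : V → ℕ, Cleans G false ω ∧ ∑ᶠ v, ω v = n}

/-- The restricted brushing number `b(G)` (each edge is traversed by exactly one brush). -/
noncomputable def brushNumber' (G : SimpleGraph V) : ℕ :=
  sInf {n | ∃ ω : V → ℕ, Cleans G true ω ∧ ∑ᶠ v, ω v = n}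



section Aux

open SimpleGraph

theorem sim {K : Type} [LinearOrder K] [Fintype V] (G : SimpleGraph V) (κ : V → K)
    (hinj : Function.Injective κ) (ω : V → ℕ)
    (hcond : ∀ v, {w | G.Adj v w ∧ κ v < κ w}.ncard ≤ ω v + {w | G.Adj v w ∧ κ w < κ v}.ncard) :
    Cleans G false ω := by
  classical
  suffices h : ∀ F : Finset V, (∀ w ∈ F, ∀ u, κ u < κ w → u ∈ F) →
      ∃ c : BrushConfig V,
        Relation.ReflTransGen (BrushStep G false) ⟨∅, G.edgeSet, ω⟩ c ∧
        c.fired = ↑F ∧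
        c.dirty = {e ∈ G.edgeSet | ∀ u ∈ F, u ∉ e} ∧
        ∀ w, w ∉ F → ω w + {u | G.Adj u w ∧ u ∈ F}.ncard ≤ c.brushes w by
    obtain ⟨c, hc, hf, _, _⟩ := h Finset.univ (by simp)
    exact ⟨c, hc, by simp [hf]⟩
  intro F
  induction F using Finset.strongInduction with
  | _ F ih =>
    intro hdc
    rcases F.eq_empty_or_nonempty with rfl | hne
    · refine ⟨⟨∅, G.edgeSet, ω⟩, Relation.ReflTransGen.refl, by simp, by ext e; simp, ?_⟩
      intro w _
      have : {u | G.Adj u w ∧ u ∈ (↑(∅ : Finset V) : Set V)} = ∅ := by ext; simp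
      simp [this]
    · obtain ⟨v, hvF, hvmax⟩ := F.exists_max_image κ hne
      set F' := F.erase v with hF'
      have hss : F' ⊂ F := Finset.erase_ssubset hvF
      have hdc' : ∀ w ∈ F', ∀ u, κ u < κ w → u ∈ F' := by
        intro w hw u hu
        have hwF : w ∈ F := Finset.mem_of_mem_erase hw
        have huF : u ∈ F := hdc w hwF u hu
        refine Finset.mem_erase.2 ⟨?_, huF⟩
        intro h; subst h
        exact absurd (lt_of_lt_of_le hu (hvmax w hwF)) (lt_irrefl _)
      obtain ⟨c', hc', hfired, hdirty, hbr⟩ := ih F' hss hdc'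
      have hvF' : v ∉ F' := Finset.notMem_erase v F
      -- complement characterization
      have hout : ∀ w, w ∉ F' ↔ (w = v ∨ κ v < κ w) := by
        intro w
        constructor
        · intro hw
          by_cases hwv : w = v
          · exact Or.inl hwv
          · right
            rcases lt_trichotomy (κ v) (κ w) with h | h | h
            · exact h
            · exact absurd (hinj h.symm) hwv
            · exact absurd (Finset.mem_erase.2 ⟨hwv, hdc v hvF w h⟩) hw
        · rintro (rfl | hw)
          · exact hvF'
          · intro hmem
            have := hvmax w (Finset.mem_of_mem_erase hmem)
            exact absurd (lt_of_lt_of_le hw this) (lt_irrefl _)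
      have hin : ∀ w, w ∈ F' ↔ κ w < κ v := by
        intro w
        constructor
        · intro hw
          have h1 := hvmax w (Finset.mem_of_mem_erase hw)
          have h2 : w ≠ v := Finset.ne_of_mem_erase hw
          exact lt_of_le_of_ne h1 (fun h => h2 (hinj h))
        · intro hw
          have : w ∈ F := hdc v hvF w hw
          exact Finset.mem_erase.2 ⟨fun h => absurd (h ▸ hw) (lt_irrefl _), this⟩
      -- the set of dirty edges at v
      have hdirtyv : {e ∈ c'.dirty | v ∈ e} = (fun w => s(v, w)) '' {w | G.Adj v w ∧ κ v < κ w} := by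
        rw [hdirty]
        ext e
        simp only [Set.mem_setOf_eq, Set.mem_image]
        constructor
        · rintro ⟨⟨he, hu⟩, hv⟩
          obtain ⟨w, rfl⟩ := Sym2.mem_iff_exists.1 hv
          have hadj : G.Adj v w := he
          refine ⟨w, ⟨hadj, ?_⟩, rfl⟩
          rcases (hout w).1 (fun hwm => hu w hwm (Sym2.mem_mk_right v w)) with rfl | h
          · exact absurd hadj G.irrefl
          · exact h
        · rintro ⟨w, ⟨hadj, hw⟩, rfl⟩
          refine ⟨⟨hadj, ?_⟩, Sym2.mem_mk_left v w⟩
          intro u huF hue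
          rcases Sym2.mem_iff.1 hue with rfl | rfl
          · exact hvF' huF
          · exact absurd ((hin _).1 huF) (not_lt.2 hw.le)
      have hcount : {e ∈ c'.dirty | v ∈ e}.ncard = {w | G.Adj v w ∧ κ v < κ w}.ncard := by
        rw [hdirtyv]
        exact Set.ncard_image_of_injective _ (fun a b h => Sym2.congr_right.mp h)
      -- earlier neighbours
      have hearlier : {w | G.Adj w v ∧ w ∈ F'} = {w | G.Adj v w ∧ κ w < κ v} := by
        ext w
        simp only [Set.mem_setOf_eq]
        constructor
        · rintro ⟨h1, h2⟩; exact ⟨h1.symm, (hin w).1 h2⟩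
        · rintro ⟨h1, h2⟩; exact ⟨h1.symm, (hin w).2 h2⟩
      set c : BrushConfig V :=
        ⟨insert v c'.fired, {e ∈ c'.dirty | v ∉ e},
          fun w => (if w = v then 0 else c'.brushes w) + c'.dirty.indicator (fun _ => 1) s(v, w)⟩
        with hc
      have hstep : BrushStep G false c' c := by
        refine ⟨v, fun _ => 1, ?_, ?_, ?_, rfl, rfl, fun w => rfl⟩
        · rw [hfired]; exact fun h => hvF' (by exact_mod_cast h)
        · intro e _ _; simp
        · have hfin : {e ∈ c'.dirty | v ∈ e}.Finite := Set.toFinite _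
          calc (∑ᶠ e ∈ {e ∈ c'.dirty | v ∈ e}, (fun _ => (1:ℕ)) e)
              = {e ∈ c'.dirty | v ∈ e}.ncard := by
                rw [← hfin.coe_toFinset, finsum_mem_coe_finset]
                simp [Set.ncard_eq_toFinset_card']
            _ = {w | G.Adj v w ∧ κ v < κ w}.ncard := hcount
            _ ≤ ω v + {w | G.Adj v w ∧ κ w < κ v}.ncard := hcond v
            _ ≤ c'.brushes v := by rw [← hearlier]; exact hbr v hvF'
      refine ⟨c, hc'.tail hstep, ?_, ?_, ?_⟩
      · show insert v c'.fired = (↑F : Set V)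
        rw [hfired, ← Finset.insert_erase hvF]
        simp [hF']
      · show {e ∈ c'.dirty | v ∉ e} = {e ∈ G.edgeSet | ∀ u ∈ F, u ∉ e}
        rw [hdirty]
        ext e
        simp only [Set.mem_setOf_eq]
        constructor
        · rintro ⟨⟨he, hu⟩, hv⟩
          refine ⟨he, fun u huF => ?_⟩
          by_cases huv : u = v
          · subst huv; exact hv
          · exact hu u (Finset.mem_erase.2 ⟨huv, huF⟩)
        · rintro ⟨he, hu⟩
          exact ⟨⟨he, fun u huF' => hu u (Finset.mem_of_mem_erase huF')⟩, hu v hvF⟩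
      · intro w hwF
        have hwv : w ≠ v := fun h => hwF (h ▸ hvF)
        have hwF' : w ∉ F' := fun h => hwF (Finset.mem_of_mem_erase h)
        show ω w + {u | G.Adj u w ∧ u ∈ F}.ncard ≤
          (if w = v then 0 else c'.brushes w) + c'.dirty.indicator (fun _ => 1) s(v, w)
        rw [if_neg hwv]
        by_cases hadj : G.Adj v w
        · have hsm : s(v, w) ∈ c'.dirty := by
            rw [hdirty]
            refine ⟨hadj, ?_⟩
            intro u huF' hue
            rcases Sym2.mem_iff.1 hue with rfl | rfl
            · exact hvF' huF'
            · exact hwF' huF'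
          have hind : c'.dirty.indicator (fun _ => (1:ℕ)) s(v, w) = 1 := by
            simp [Set.indicator_of_mem hsm]
          rw [hind]
          have hsets : {u | G.Adj u w ∧ u ∈ F} = insert v {u | G.Adj u w ∧ u ∈ F'} := by
            ext u
            simp only [Set.mem_setOf_eq, Set.mem_insert_iff]
            constructor
            · rintro ⟨h1, h2⟩
              by_cases huv : u = v
              · exact Or.inl huv
              · exact Or.inr ⟨h1, Finset.mem_erase.2 ⟨huv, h2⟩⟩
            · rintro (rfl | ⟨h1, h2⟩)
              · exact ⟨hadj, hvF⟩
              · exact ⟨h1, Finset.mem_of_mem_erase h2⟩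
          have hvnot : v ∉ {u | G.Adj u w ∧ u ∈ F'} := fun h => hvF' h.2
          rw [hsets, Set.ncard_insert_of_notMem hvnot (Set.toFinite _)]
          have := hbr w hwF'
          omega
        · have hsets : {u | G.Adj u w ∧ u ∈ F} = {u | G.Adj u w ∧ u ∈ F'} := by
            ext u
            simp only [Set.mem_setOf_eq]
            constructor
            · rintro ⟨h1, h2⟩
              refine ⟨h1, Finset.mem_erase.2 ⟨?_, h2⟩⟩
              rintro rfl; exact hadj h1
            · rintro ⟨h1, h2⟩; exact ⟨h1, Finset.mem_of_mem_erase h2⟩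
          rw [hsets]
          exact le_trans (hbr w hwF') (Nat.le_add_right _ _)


lemma exists_force (H : SimpleGraph V) (S B : Set V) (hSB : S ⊆ B) {w}
    (hw : ZFClosure H S w) (hwB : w ∉ B) :
    ∃ a b, a ∈ B ∧ b ∉ B ∧ H.Adj a b ∧ ∀ u, H.Adj a u → u ≠ b → u ∈ B := by
  induction hw with
  | init h => exact absurd (hSB h) hwB
  | @force v w hv hadj hall ihv ihall =>
    by_cases hvB : v ∈ B
    · by_cases hU : ∀ u, H.Adj v u → u ≠ w → u ∈ B
      · exact ⟨v, w, hvB, hwB, hadj, hU⟩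
      · push_neg at hU
        obtain ⟨u, hadj', hne, huB⟩ := hU
        exact ihall u hadj' hne huB
    · exact ihv hvB

lemma extract [Finite V] [Nonempty V] (H : SimpleGraph V) (S : Set V)
    (hS : IsZeroForcingSet H S) :
    ∃ (N : ℕ) (e f : ℕ → V),
      (∀ k < N,
        e k ∈ S ∪ f '' Set.Iio k ∧
        f k ∉ S ∪ f '' Set.Iio k ∧
        H.Adj (e k) (f k) ∧
        ∀ u, H.Adj (e k) u → u ≠ f k → u ∈ S ∪ f '' Set.Iio k) ∧
      ∀ w : V, w ∈ S ∪ f '' Set.Iio N := by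
  classical
  suffices h : ∀ (n : ℕ) (B : Set V), S ⊆ B → (Set.univ \ B).ncard ≤ n →
      ∃ (N : ℕ) (e f : ℕ → V),
        (∀ k < N,
          e k ∈ B ∪ f '' Set.Iio k ∧
          f k ∉ B ∪ f '' Set.Iio k ∧
          H.Adj (e k) (f k) ∧
          ∀ u, H.Adj (e k) u → u ≠ f k → u ∈ B ∪ f '' Set.Iio k) ∧
        ∀ w : V, w ∈ B ∪ f '' Set.Iio N by
    exact h (Set.univ \ S).ncard S le_rfl le_rfl
  intro n
  induction n with
  | zero =>
    intro B hSB h0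
    have hB : ∀ w, w ∈ B := by
      intro w
      by_contra hw
      have hmem : w ∈ Set.univ \ B := ⟨trivial, hw⟩
      have : (Set.univ \ B).ncard = 0 := Nat.le_zero.mp h0
      rw [Set.ncard_eq_zero (Set.toFinite _)] at this
      rw [this] at hmem
      exact hmem
    exact ⟨0, fun _ => Classical.arbitrary V, fun _ => Classical.arbitrary V,
      by intro k hk; omega, fun w => Or.inl (hB w)⟩
  | succ n ihn =>
    intro B hSB hcard
    by_cases hB : ∀ w, w ∈ B
    · exact ⟨0, fun _ => Classical.arbitrary V, fun _ => Classical.arbitrary V,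
        by intro k hk; omega, fun w => Or.inl (hB w)⟩
    · push_neg at hB
      obtain ⟨w, hw⟩ := hB
      obtain ⟨a, b, haB, hbB, hab, hforce⟩ := exists_force H S B hSB (hS w) hw
      have hcard' : (Set.univ \ insert b B).ncard ≤ n := by
        have h1 : Set.univ \ insert b B = (Set.univ \ B) \ {b} := by
          ext u; simp [Set.mem_diff]; tauto
        have h2 : b ∈ Set.univ \ B := ⟨trivial, hbB⟩
        rw [h1, Set.ncard_diff_singleton_of_mem h2]
        omega
      obtain ⟨N', e', f', hstep', hall'⟩ := ihn (insert b B) (hSB.trans (Set.subset_insert b B)) hcard'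
      refine ⟨N' + 1, fun k => if k = 0 then a else e' (k - 1),
        fun k => if k = 0 then b else f' (k - 1), ?_, ?_⟩
      · intro k hk
        rcases Nat.eq_zero_or_pos k with rfl | hkpos
        · have hIio : Set.Iio (0:ℕ) = ∅ := by
            ext u
            simp only [Set.mem_Iio, Set.mem_empty_iff_false, iff_false]
            omega
          have himg : (fun k => if k = 0 then b else f' (k - 1)) '' Set.Iio 0 = ∅ := by
            rw [hIio, Set.image_empty]
          rw [himg]
          simp only [if_pos rfl, Set.union_empty]
          exact ⟨haB, hbB, hab, hforce⟩
        · obtain ⟨j, rfl⟩ : ∃ j, k = j + 1 := ⟨k - 1, by omega⟩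
          have himg : B ∪ (fun k => if k = 0 then b else f' (k - 1)) '' Set.Iio (j + 1)
              = insert b B ∪ f' '' Set.Iio j := by
            ext u
            simp only [Set.mem_union, Set.mem_image, Set.mem_Iio, Set.mem_insert_iff]
            constructor
            · rintro (h | ⟨m, hm, hmu⟩)
              · exact Or.inl (Or.inr h)
              · rcases Nat.eq_zero_or_pos m with rfl | hmpos
                · simp only [if_pos rfl] at hmu; exact Or.inl (Or.inl hmu.symm)
                · right
                  refine ⟨m - 1, by omega, ?_⟩
                  simpa [Nat.pos_iff_ne_zero.mp hmpos] using hmu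
            · rintro ((rfl | h) | ⟨m, hm, hmu⟩)
              · exact Or.inr ⟨0, by omega, by simp⟩
              · exact Or.inl h
              · exact Or.inr ⟨m + 1, by omega, by simpa using hmu⟩
          obtain ⟨h1, h2, h3, h4⟩ := hstep' j (by omega)
          simp only [Nat.add_sub_cancel, if_neg (Nat.succ_ne_zero j)]
          rw [himg]
          exact ⟨h1, h2, h3, h4⟩
      · intro u
        have := hall' u
        have himg : B ∪ (fun k => if k = 0 then b else f' (k - 1)) '' Set.Iio (N' + 1)
            = insert b B ∪ f' '' Set.Iio N' := by
          ext u
          simp only [Set.mem_union, Set.mem_image, Set.mem_Iio, Set.mem_insert_iff]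
          constructor
          · rintro (h | ⟨m, hm, hmu⟩)
            · exact Or.inl (Or.inr h)
            · rcases Nat.eq_zero_or_pos m with rfl | hmpos
              · simp only [if_pos rfl] at hmu; exact Or.inl (Or.inl hmu.symm)
              · right
                refine ⟨m - 1, by omega, ?_⟩
                simpa [Nat.pos_iff_ne_zero.mp hmpos] using hmu
          · rintro ((rfl | h) | ⟨m, hm, hmu⟩)
            · exact Or.inr ⟨0, by omega, by simp⟩
            · exact Or.inl h
            · exact Or.inr ⟨m + 1, by omega, by simpa using hmu⟩
        rw [himg]
        exact this


-- κ-order helper lemmas over lex triples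
abbrev KK := ℕ ×ₗ (ℕ ×ₗ ℕ)

lemma kk_lt_of_fst {a b : ℕ × (ℕ ×ₗ ℕ)} (h : a.1 < b.1) : toLex a < toLex b :=
  Prod.Lex.lt_iff.mpr (Or.inl h)

lemma kk_fst_le {a b : ℕ × (ℕ ×ₗ ℕ)} (h : toLex a < toLex b) : a.1 ≤ b.1 := by
  rcases Prod.Lex.lt_iff.mp h with h | ⟨h, _⟩
  · exact le_of_lt h
  · exact le_of_eq h

lemma kk_lt_of_snd {a b : ℕ × (ℕ ×ₗ ℕ)} (h1 : a.1 = b.1) (h2 : a.2 < b.2) :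
    toLex a < toLex b := Prod.Lex.lt_iff.mpr (Or.inr ⟨h1, h2⟩)

lemma kk2_lt_of_fst {a b : ℕ × ℕ} (h : a.1 < b.1) : toLex a < toLex b :=
  Prod.Lex.lt_iff.mpr (Or.inl h)

lemma kk_inj {a b : ℕ × (ℕ × ℕ)} (h : toLex (a.1, toLex a.2) = toLex (b.1, toLex b.2)) :
    a = b := by
  have h1 := congrArg (fun x => (ofLex x).1) h
  have h2 := congrArg (fun x => (ofLex x).2) h
  simp only [ofLex_toLex] at h1 h2
  have h3 : a.2 = b.2 := by
    have := congrArg (fun x => ofLex x) h2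
    simpa using this
  exact Prod.ext h1 h3

open SimpleGraph

variable [Fintype V] [Nonempty V] (G : SimpleGraph V)

lemma comb (S : Set G.edgeSet) (N : ℕ) (e f : ℕ → G.edgeSet)
    (hstep : ∀ k < N,
      e k ∈ S ∪ f '' Set.Iio k ∧
      f k ∉ S ∪ f '' Set.Iio k ∧
      (G.lineGraph).Adj (e k) (f k) ∧
      ∀ u, (G.lineGraph).Adj (e k) u → u ≠ f k → u ∈ S ∪ f '' Set.Iio k)
    (hall : ∀ w : G.edgeSet, w ∈ S ∪ f '' Set.Iio N) :
    ∃ (κ : V → KK) (ω : V → ℕ), Function.Injective κ ∧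
      (∀ v, {w | G.Adj v w ∧ κ v < κ w}.ncard
          ≤ ω v + {w | G.Adj v w ∧ κ w < κ v}.ncard) ∧
      ∑ v, ω v ≤ S.ncard := by
  classical
  haveI : Fintype G.edgeSet := Fintype.ofFinite _
  set B : ℕ → Set G.edgeSet := fun k => S ∪ f '' Set.Iio k with hB
  have hBmono : ∀ {k k' : ℕ}, k ≤ k' → B k ⊆ B k' := by
    intro k k' hkk g hg
    rcases hg with hg | ⟨j, hj, rfl⟩
    · exact Or.inl hg
    · exact Or.inr ⟨j, lt_of_lt_of_le hj hkk, rfl⟩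
  have hfmem : ∀ {j k : ℕ}, j < k → f j ∈ B k := fun hjk => Or.inr ⟨_, hjk, rfl⟩
  -- shared vertex of e k and f k
  have hef_ne : ∀ k < N, e k ≠ f k := by
    intro k hk
    exact ((lineGraph_adj_iff_exists).mp (hstep k hk).2.2.1).1
  have hshared : ∀ k < N, ∃ w, w ∈ (e k : Sym2 V) ∧ w ∈ (f k : Sym2 V) := by
    intro k hk
    exact ((lineGraph_adj_iff_exists).mp (hstep k hk).2.2.1).2
  set x : ℕ → V := fun k =>
    if h : ∃ w, w ∈ (e k : Sym2 V) ∧ w ∈ (f k : Sym2 V) then h.choose else Classical.arbitrary V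
    with hxdef
  have hx : ∀ k < N, x k ∈ (e k : Sym2 V) ∧ x k ∈ (f k : Sym2 V) := by
    intro k hk
    have h := hshared k hk
    simp only [hxdef, dif_pos h]
    exact h.choose_spec
  -- two distinct edges share at most one vertex
  have shared_unique : ∀ (g h : G.edgeSet), g ≠ h →
      ∀ u u', u ∈ (g : Sym2 V) → u ∈ (h : Sym2 V) → u' ∈ (g : Sym2 V) → u' ∈ (h : Sym2 V) →
      u = u' := by
    intro g h hgh u u' h1 h2 h3 h4
    by_contra hne
    have hg : (g : Sym2 V) = s(u, u') := (Sym2.mem_and_mem_iff hne).mp ⟨h1, h3⟩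
    have hh : (h : Sym2 V) = s(u, u') := (Sym2.mem_and_mem_iff hne).mp ⟨h2, h4⟩
    exact hgh (Subtype.ext (hg.trans hh.symm))
  -- τ
  set τ : G.edgeSet → ℕ := fun g =>
    if h : ∃ j, j < N ∧ f j = g then Nat.find h + 1 else 0 with hτdef
  have hτS : ∀ g ∈ S, τ g = 0 := by
    intro g hg
    have hno : ¬∃ j, j < N ∧ f j = g := by
      rintro ⟨j, hj, rfl⟩
      exact (hstep j hj).2.1 (Or.inl hg)
    simp only [hτdef, dif_neg hno]
  have hτf : ∀ k < N, τ (f k) = k + 1 := by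
    intro k hk
    have h : ∃ j, j < N ∧ f j = f k := ⟨k, hk, rfl⟩
    have hle : Nat.find h ≤ k := Nat.find_le ⟨hk, rfl⟩
    have hspec := Nat.find_spec h
    have heq : Nat.find h = k := by
      rcases lt_or_eq_of_le hle with hlt | heq
      · exact absurd (hspec.2 ▸ hfmem hlt) (hstep k hk).2.1
      · exact heq
    simp only [hτdef, dif_pos h, heq]
  have hτB : ∀ k < N, ∀ g ∈ B k, τ g ≤ k := by
    intro k hk g hg
    rcases hg with hg | ⟨j, hj, rfl⟩
    · rw [hτS g hg]; omega
    · have hjk : j < k := hj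
      rw [hτf j (lt_trans hjk hk)]; omega
  -- σ
  set σ : V → ℕ := fun v =>
    Finset.univ.sup (fun g : G.edgeSet => if v ∈ (g : Sym2 V) then τ g else 0) with hσdef
  have hσ_ge : ∀ (v : V) (g : G.edgeSet), v ∈ (g : Sym2 V) → τ g ≤ σ v := by
    intro v g hv
    have := Finset.le_sup (f := fun g : G.edgeSet => if v ∈ (g : Sym2 V) then τ g else 0)
      (Finset.mem_univ g)
    simpa only [if_pos hv] using this
  have hσ_le : ∀ (v : V) (m : ℕ), (∀ g : G.edgeSet, v ∈ (g : Sym2 V) → τ g ≤ m) → σ v ≤ m := by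
    intro v m hm
    apply Finset.sup_le
    intro g _
    by_cases hv : v ∈ (g : Sym2 V)
    · rw [if_pos hv]; exact hm g hv
    · rw [if_neg hv]; omega
  -- all edges at the trailing side, or at x k other than f k, are in B k
  have hBside : ∀ k < N, ∀ u, u ∈ (e k : Sym2 V) → ∀ g : G.edgeSet,
      u ∈ (g : Sym2 V) → g ≠ f k → g ∈ B k := by
    intro k hk u hu g hg hgfk
    by_cases hgek : g = e k
    · exact hgek ▸ (hstep k hk).1
    · refine (hstep k hk).2.2.2 g ?_ hgfk
      exact (lineGraph_adj_iff_exists).mpr ⟨Ne.symm hgek, u, hu, hg⟩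
  have hσx : ∀ k < N, σ (x k) = k + 1 := by
    intro k hk
    apply le_antisymm
    · apply hσ_le
      intro g hg
      by_cases hgfk : g = f k
      · rw [hgfk, hτf k hk]
      · have : g ∈ B k := hBside k hk (x k) (hx k hk).1 g hg hgfk
        have := hτB k hk g this
        omega
    · rw [← hτf k hk]
      exact hσ_ge (x k) (f k) (hx k hk).2
  -- trailing vertices have small σ
  have hσtrail : ∀ k < N, ∀ u, u ∈ (e k : Sym2 V) → u ≠ x k → σ u ≤ k := by
    intro k hk u hu hune
    apply hσ_le
    intro g hg
    have hgfk : g ≠ f k := by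
      rintro rfl
      exact hune (shared_unique (e k) (f k) (hef_ne k hk) u (x k) hu hg (hx k hk).1 (hx k hk).2)
    exact hτB k hk g (hBside k hk u hu g hg hgfk)
  -- x-uniqueness
  have hxuniq : ∀ k k', k < N → k' < N → x k = x k' → k = k' := by
    intro k k' hk hk' hxx
    by_contra hne
    wlog hlt : k < k' generalizing k k'
    · exact this k' k hk' hk hxx.symm (Ne.symm hne) (by omega)
    have h1 : f k' ≠ e k := by
      intro h
      exact (hstep k' hk').2.1 (hBmono (le_of_lt hlt) (h ▸ (hstep k hk).1))
    have h2 : f k' ≠ f k := by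
      intro h
      exact (hstep k' hk').2.1 (h ▸ hfmem hlt)
    have h3 : f k' ∈ B k := by
      refine hBside k hk (x k) (hx k hk).1 (f k') ?_ h2
      rw [hxx]; exact (hx k' hk').2
    exact (hstep k' hk').2.1 (hBmono (le_of_lt hlt) h3)
  -- key
  set bb : V → ℕ := fun v =>
    if ∃ k, k < N ∧ σ v = k + 1 ∧ v ∈ (e k : Sym2 V) ∧ v ∈ (f k : Sym2 V) then 0 else 1
    with hbbdef
  set ii : V → ℕ := fun v => (Fintype.equivFin V v : ℕ) with hiidef
  set κ : V → KK := fun v => toLex (σ v, toLex (bb v, ii v)) with hκdef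
  have hκinj : Function.Injective κ := by
    intro v w h
    have := kk_inj (a := (σ v, (bb v, ii v))) (b := (σ w, (bb w, ii w))) h
    have hii : ii v = ii w := by
      have := congrArg (fun p => p.2.2) this
      simpa using this
    exact (Fintype.equivFin V).injective (Fin.ext hii)
  have hκσ : ∀ {v w}, σ v < σ w → κ v < κ w := by
    intro v w h
    exact kk_lt_of_fst (a := (σ v, toLex (bb v, ii v))) (b := (σ w, toLex (bb w, ii w))) h
  have hκσ_le : ∀ {v w}, κ v < κ w → σ v ≤ σ w := by
    intro v w h
    exact kk_fst_le (a := (σ v, toLex (bb v, ii v))) (b := (σ w, toLex (bb w, ii w))) h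
  have hκbb : ∀ {v w}, σ v = σ w → bb v < bb w → κ v < κ w := by
    intro v w h1 h2
    refine kk_lt_of_snd (a := (σ v, toLex (bb v, ii v))) (b := (σ w, toLex (bb w, ii w))) h1 ?_
    exact kk2_lt_of_fst (a := (bb v, ii v)) (b := (bb w, ii w)) h2
  have hbbx : ∀ k < N, bb (x k) = 0 := by
    intro k hk
    have : ∃ k', k' < N ∧ σ (x k) = k' + 1 ∧ x k ∈ (e k' : Sym2 V) ∧ x k ∈ (f k' : Sym2 V) :=
      ⟨k, hk, hσx k hk, (hx k hk).1, (hx k hk).2⟩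
    simp only [hbbdef, if_pos this]
  -- head lemma
  have hhead : ∀ k < N, ∀ v, v ∈ (f k : Sym2 V) → v ≠ x k → κ (x k) < κ v := by
    intro k hk v hv hvx
    have hσv : k + 1 ≤ σ v := by
      rw [← hτf k hk]
      exact hσ_ge v (f k) hv
    rcases lt_or_eq_of_le hσv with hlt | heq
    · rw [← hσx k hk] at hlt
      exact hκσ hlt
    · have hbbv : bb v = 1 := by
        have hno : ¬∃ k', k' < N ∧ σ v = k' + 1 ∧ v ∈ (e k' : Sym2 V) ∧ v ∈ (f k' : Sym2 V) := by
          rintro ⟨k', hk', hσ', hve', hvf'⟩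
          have hkk' : k' = k := by omega
          subst hkk'
          exact hvx (shared_unique (e k') (f k') (hef_ne k' hk') v (x k') hve' hvf'
            (hx k' hk').1 (hx k' hk').2)
        simp only [hbbdef, if_neg hno]
      refine hκbb ?_ ?_
      · rw [hσx k hk, heq]
      · rw [hbbx k hk, hbbv]; omega
  -- ω
  set ω : V → ℕ := fun v =>
    {w | ∃ h : G.Adj v w, (⟨s(v, w), h⟩ : G.edgeSet) ∈ S ∧ κ v < κ w}.ncard with hωdef
  refine ⟨κ, ω, hκinj, ?_, ?_⟩
  · -- the degree condition
    intro v
    set AS : Set V := {w | ∃ h : G.Adj v w, (⟨s(v, w), h⟩ : G.edgeSet) ∈ S ∧ κ v < κ w} with hAS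
    set An : Set V := {w | ∃ h : G.Adj v w, (⟨s(v, w), h⟩ : G.edgeSet) ∉ S ∧ κ v < κ w} with hAn
    have hsplit : {w | G.Adj v w ∧ κ v < κ w} = AS ∪ An := by
      ext w
      simp only [hAS, hAn, Set.mem_setOf_eq, Set.mem_union]
      constructor
      · rintro ⟨h1, h2⟩
        by_cases hmem : (⟨s(v, w), h1⟩ : G.edgeSet) ∈ S
        · exact Or.inl ⟨h1, hmem, h2⟩
        · exact Or.inr ⟨h1, hmem, h2⟩
      · rintro (⟨h1, _, h2⟩ | ⟨h1, _, h2⟩) <;> exact ⟨h1, h2⟩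
    have hdisj : Disjoint AS An := by
      rw [Set.disjoint_iff_forall_ne]
      rintro w ⟨h1, hm1, _⟩ w' ⟨h2, hm2, _⟩ rfl
      exact hm2 hm1
    rw [hsplit, Set.ncard_union_eq hdisj (Set.toFinite _) (Set.toFinite _)]
    have hωv : ω v = AS.ncard := rfl
    rw [hωv]
    apply Nat.add_le_add_left
    -- An has at most one element and forces an earlier neighbour
    rcases Set.eq_empty_or_nonempty An with hemp | ⟨w₀, hw₀⟩
    · rw [hemp, Set.ncard_empty]; omega
    · obtain ⟨hadj₀, hnS₀, hκ₀⟩ := hw₀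
      obtain ⟨k, hk, hfk⟩ : ∃ k, k < N ∧ f k = ⟨s(v, w₀), hadj₀⟩ := by
        rcases hall ⟨s(v, w₀), hadj₀⟩ with h | ⟨j, hj, hje⟩
        · exact absurd h hnS₀
        · exact ⟨j, hj, hje⟩
      have hvfk : v ∈ (f k : Sym2 V) := by rw [hfk]; exact Sym2.mem_mk_left v w₀
      have hvx : v = x k := by
        by_contra hne
        have h1 := hhead k hk v hvfk hne
        have hxkm : x k ∈ (f k : Sym2 V) := (hx k hk).2
        rw [hfk] at hxkm
        rcases Sym2.mem_iff.mp hxkm with h | h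
        · exact hne h.symm
        · rw [← h] at hκ₀
          exact absurd (lt_trans h1 hκ₀) (lt_irrefl _)
      -- An ⊆ {w₀}
      have hAnsub : An ⊆ {w₀} := by
        rintro w' ⟨hadj', hnS', hκ'⟩
        obtain ⟨k', hk', hfk'⟩ : ∃ k', k' < N ∧ f k' = ⟨s(v, w'), hadj'⟩ := by
          rcases hall ⟨s(v, w'), hadj'⟩ with h | ⟨j, hj, hje⟩
          · exact absurd h hnS'
          · exact ⟨j, hj, hje⟩
        have hvfk' : v ∈ (f k' : Sym2 V) := by rw [hfk']; exact Sym2.mem_mk_left v w'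
        have hvx' : v = x k' := by
          by_contra hne
          have h1 := hhead k' hk' v hvfk' hne
          have hxkm : x k' ∈ (f k' : Sym2 V) := (hx k' hk').2
          rw [hfk'] at hxkm
          rcases Sym2.mem_iff.mp hxkm with h | h
          · exact hne h.symm
          · rw [← h] at hκ'
            exact absurd (lt_trans h1 hκ') (lt_irrefl _)
        have hkk : k' = k := hxuniq k' k hk' hk (hvx'.symm.trans hvx)
        have : (⟨s(v, w'), hadj'⟩ : G.edgeSet) = ⟨s(v, w₀), hadj₀⟩ := by
          rw [← hfk', hkk, hfk]
        have := congrArg Subtype.val this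
        exact Sym2.congr_right.mp this
      have hAn1 : An.ncard ≤ 1 := by
        calc An.ncard ≤ ({w₀} : Set V).ncard := Set.ncard_le_ncard hAnsub (Set.toFinite _)
          _ = 1 := Set.ncard_singleton w₀
      -- the earlier side is nonempty
      have hvek : v ∈ (e k : Sym2 V) := hvx ▸ (hx k hk).1
      set t : V := Sym2.Mem.other hvek with htdef
      have hts : s(v, t) = (e k : Sym2 V) := Sym2.other_spec hvek
      have hnd : ¬(e k : Sym2 V).IsDiag := G.not_isDiag_of_mem_edgeSet (e k).2
      have htne : t ≠ v := Sym2.other_ne hnd hvek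
      have hadjt : G.Adj v t := by
        rw [← SimpleGraph.mem_edgeSet, hts]
        exact (e k).2
      have htmem : t ∈ (e k : Sym2 V) := by
        rw [← hts]; exact Sym2.mem_mk_right v t
      have htκ : κ t < κ v := by
        have h1 : σ t ≤ k := by
          apply hσtrail k hk t htmem
          rw [← hvx]; exact htne
        have h2 : σ v = k + 1 := by rw [hvx]; exact hσx k hk
        exact hκσ (by omega)
      have hne2 : ({t} : Set V) ⊆ {w | G.Adj v w ∧ κ w < κ v} := by
        rintro u rfl
        exact ⟨hadjt, htκ⟩
      have : 1 ≤ {w | G.Adj v w ∧ κ w < κ v}.ncard := by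
        calc 1 = ({t} : Set V).ncard := (Set.ncard_singleton t).symm
          _ ≤ _ := Set.ncard_le_ncard hne2 (Set.toFinite _)
      omega
  · -- the sum bound
    set P : V → V → Prop := fun v w =>
      ∃ h : G.Adj v w, (⟨s(v, w), h⟩ : G.edgeSet) ∈ S ∧ κ v < κ w with hP
    have hωcard : ∀ v, ω v = (Finset.univ.filter (fun w => P v w)).card := by
      intro v
      simp only [hωdef]
      rw [Set.ncard_eq_toFinset_card']
      congr 1
      ext w
      simp [hP]
    have hsum : ∑ v, ω v = (Finset.univ.sigma (fun v => Finset.univ.filter (fun w => P v w))).card := by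
      rw [Finset.card_sigma]
      exact Finset.sum_congr rfl (fun v _ => hωcard v)
    rw [hsum]
    have hScard : S.ncard = (S.toFinite.toFinset.image Subtype.val).card := by
      rw [Finset.card_image_of_injective _ Subtype.val_injective,
        ← Set.ncard_eq_toFinset_card]
    rw [hScard]
    apply Finset.card_le_card_of_injOn (fun p => s(p.1, p.2))
    · rintro ⟨v, w⟩ hp
      simp only [Finset.mem_coe, Finset.mem_sigma, Finset.mem_filter, Finset.mem_univ, true_and] at hp
      obtain ⟨h, hmem, _⟩ := hp
      simp only [Finset.mem_coe, Finset.mem_image, Set.Finite.mem_toFinset]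
      exact ⟨⟨s(v, w), h⟩, hmem, rfl⟩
    · rintro ⟨v, w⟩ hp ⟨v', w'⟩ hq heq
      simp only [Finset.mem_coe, Finset.mem_sigma, Finset.mem_filter, Finset.mem_univ,
        true_and] at hp hq
      obtain ⟨_, _, hκp⟩ := hp
      obtain ⟨_, _, hκq⟩ := hq
      simp only at heq
      rcases Sym2.eq_iff.mp heq with ⟨h1, h2⟩ | ⟨h1, h2⟩
      · subst h1; subst h2; rfl
      · subst h1; subst h2
        exact absurd (lt_trans hκp hκq) (lt_irrefl _)


end Aux

theorem brushNumber_le_zfNumber_lineGraph {V : Type*} [Fintype V] (G : SimpleGraph V)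
    (hiso : ∀ v : V, ∃ w, G.Adj v w) :
    brushNumber G ≤ zfNumber G.lineGraph := by
  classical
  cases isEmpty_or_nonempty V with
  | inl h =>
    have hcl : Cleans G false (fun _ => 0) := by
      refine ⟨⟨∅, G.edgeSet, fun _ => 0⟩, Relation.ReflTransGen.refl, ?_⟩
      show (∅ : Set V) = Set.univ
      exact (Set.univ_eq_empty_iff.mpr h).symm
    have hmem : (0 : ℕ) ∈ {n | ∃ ω : V → ℕ, Cleans G false ω ∧ ∑ᶠ v, ω v = n} :=
      ⟨fun _ => 0, hcl, by simp⟩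
    have : brushNumber G ≤ 0 := Nat.sInf_le hmem
    omega
  | inr h =>
    have hne : {n | ∃ S : Set G.edgeSet, IsZeroForcingSet G.lineGraph S ∧ S.ncard = n}.Nonempty :=
      ⟨(Set.univ : Set G.edgeSet).ncard, Set.univ, fun v => ZFClosure.init trivial, rfl⟩
    obtain ⟨S, hS, hcard⟩ := Nat.sInf_mem hne
    haveI : Finite G.edgeSet := Subtype.finite
    haveI : Nonempty G.edgeSet := by
      obtain ⟨w, hw⟩ := hiso (Classical.arbitrary V)
      exact ⟨⟨s(Classical.arbitrary V, w), hw⟩⟩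
    obtain ⟨N, e, f, hstep, hall⟩ := extract G.lineGraph S hS
    obtain ⟨κ, ω, hκinj, hcond, hsum⟩ := comb G S N e f hstep hall
    have hcl := sim G κ hκinj ω hcond
    have h1 : brushNumber G ≤ ∑ᶠ v, ω v := Nat.sInf_le ⟨ω, hcl, rfl⟩
    have h2 : (∑ᶠ v, ω v) = ∑ v, ω v := finsum_eq_sum_of_fintype ω
    calc brushNumber G ≤ ∑ᶠ v, ω v := h1
      _ = ∑ v, ω v := h2
      _ ≤ S.ncard := hsum
      _ = zfNumber G.lineGraph := hcard


end Paper
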